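/- arXiv:2203.09327 — 4 statements merged into one kernel-verified Lean document; each statement's English description precedes it below -/
import Mathlib

section
/- Let N_i be a positive integer, M a finite set of stations, F : M → Finset V feasibility sets over a finite vertex set V, and x : M → ℝ≥0 with ∑_{j∈M} x_j = 1. Suppose that for every proper subset S ⊊ M, N_i·∑_{j∈S} x_j ≤ max(0, |⋃_{j∈S} F_j| − |S|), and that |⋃_{j∈M} F_j| = N_i. Then any n : M → ℕ with n_j ∈ {⌊N_i·x_j⌋, ⌈N_i·x_j⌉} for all j and ∑_{j∈M} n_j = N_i satisfies the Hall condition: for every S ⊆ M, ∑_{j∈S} n_j ≤ |⋃_{j∈S} F_j|. -/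
/-- Tightened continuous constraints guarantee the discrete Hall condition for
any consistent rounding. -/
theorem stmt1 {ι V : Type*} [DecidableEq ι] [DecidableEq V]
    (Ni : ℕ) (hNi : 0 < Ni) (M : Finset ι) (F : ι → Finset V)
    (x : ι → ℝ) (hx0 : ∀ j ∈ M, 0 ≤ x j) (hx1 : ∑ j ∈ M, x j = 1)
    (hconstr : ∀ S ⊆ M, S ≠ M →
      (Ni : ℝ) * ∑ j ∈ S, x j ≤ max 0 (((S.biUnion F).card : ℝ) - S.card))
    (hfull : (M.biUnion F).card = Ni)
    (n : ι → ℕ)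
    (hn : ∀ j ∈ M, (n j : ℤ) = ⌊(Ni : ℝ) * x j⌋ ∨ (n j : ℤ) = ⌈(Ni : ℝ) * x j⌉)
    (hnsum : ∑ j ∈ M, n j = Ni) :
    ∀ S ⊆ M, ∑ j ∈ S, n j ≤ (S.biUnion F).card := by
  intro S hS
  rcases eq_or_ne S M with rfl | hne
  · rw [hnsum, hfull]
  · have hcon := hconstr S hS hne
    by_cases hcs : (S.card : ℝ) ≤ (S.biUnion F).card
    · have hmax : max 0 (((S.biUnion F).card : ℝ) - S.card)
          = ((S.biUnion F).card : ℝ) - S.card := by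
        rw [max_eq_right]; linarith
      rw [hmax] at hcon
      rcases S.eq_empty_or_nonempty with rfl | hSne
      · simp
      have h1 : (∑ j ∈ S, (n j : ℝ)) < (Ni : ℝ) * ∑ j ∈ S, x j + S.card := by
        rw [Finset.mul_sum]
        have hb : ∀ j ∈ S, (n j : ℝ) < (Ni : ℝ) * x j + 1 := by
          intro j hj
          rcases hn j (hS hj) with h | h
          · have he : (n j : ℝ) = (⌊(Ni : ℝ) * x j⌋ : ℝ) := by exact_mod_cast h
            have := Int.floor_le ((Ni : ℝ) * x j)
            rw [he]; linarith
          · have he : (n j : ℝ) = (⌈(Ni : ℝ) * x j⌉ : ℝ) := by exact_mod_cast h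
            rw [he]; exact Int.ceil_lt_add_one _
        calc ∑ j ∈ S, (n j : ℝ)
            < ∑ j ∈ S, ((Ni : ℝ) * x j + 1) := Finset.sum_lt_sum_of_nonempty hSne hb
          _ = ∑ j ∈ S, (Ni : ℝ) * x j + S.card := by
              rw [Finset.sum_add_distrib]; simp
      have h2 : (∑ j ∈ S, (n j : ℝ)) < ((S.biUnion F).card : ℝ) := by linarith
      have h3 : ∑ j ∈ S, n j < (S.biUnion F).card := by exact_mod_cast h2
      exact h3.le
    · have hmax : max 0 (((S.biUnion F).card : ℝ) - S.card) = 0 := by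
        rw [max_eq_left]; linarith
      rw [hmax] at hcon
      have hnn : 0 ≤ ∑ j ∈ S, x j :=
        Finset.sum_nonneg (fun j hj => hx0 j (hS hj))
      have hNiR : (0 : ℝ) < (Ni : ℝ) := by exact_mod_cast hNi
      have hxsum : ∑ j ∈ S, x j = 0 := by nlinarith
      have hx0' : ∀ j ∈ S, x j = 0 :=
        (Finset.sum_eq_zero_iff_of_nonneg (fun j hj => hx0 j (hS hj))).mp hxsum
      have hz : ∀ j ∈ S, n j = 0 := by
        intro j hj
        have h := hn j (hS hj)
        rw [hx0' j hj, mul_zero] at h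
        simp at h
        exact_mod_cast h
      rw [Finset.sum_eq_zero hz]
      exact Nat.zero_le _
end

section
/- Let C be a finite index set, m a positive integer, N : C → ℝ with N_i > 0 for all i, A_G an m×m positive definite diagonal matrix, and b_G ∈ ℝ^m. Define for each i the cost J^i(x^i, x^{-i}) = (1/2)·N_i²·(x^i)ᵀ A_G x^i + N_i·(x^i)ᵀ(A_G·σ(x^{-i}) + b_G), where σ(x^{-i}) = ∑_{j≠i} N_j x^j, and J_G(x) = (1/2)·σ(x)ᵀ A_G σ(x) + b_Gᵀ σ(x) with σ(x) = ∑_i N_i x^i. Then for all i and all x, the gradient of J^i with respect to x^i equals the gradient of J_G with respect to x^i, i.e., J_G is an exact potential for the game. -/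
open Matrix Finset

/-- Exact potential property: the partial derivative of each company's cost
with respect to its own decision equals the partial derivative of the
government's objective. -/
theorem stmt4 {C : Type*} [Fintype C] [DecidableEq C] (m : ℕ)
    (N : C → ℝ) (hN : ∀ i, 0 < N i)
    (d : Fin m → ℝ) (AG : Matrix (Fin m) (Fin m) ℝ) (hAG : AG = Matrix.diagonal d)
    (hpd : AG.PosDef) (bG : Fin m → ℝ) :
    ∀ (i : C) (x : C → Fin m → ℝ),
      fderiv ℝ (fun y : Fin m → ℝ =>
          (1 / 2) * (N i) ^ 2 * (y ⬝ᵥ AG *ᵥ y)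
            + N i * (y ⬝ᵥ (AG *ᵥ (∑ j ∈ univ.erase i, N j • x j) + bG))) (x i)
      = fderiv ℝ (fun y : Fin m → ℝ =>
          (1 / 2) * ((∑ j, N j • Function.update x i y j) ⬝ᵥ
              AG *ᵥ (∑ j, N j • Function.update x i y j))
            + bG ⬝ᵥ (∑ j, N j • Function.update x i y j)) (x i) := by
  intro i x
  set s : Fin m → ℝ := ∑ j ∈ univ.erase i, N j • x j with hs
  have hsum : ∀ y : Fin m → ℝ, (∑ j, N j • Function.update x i y j) = N i • y + s := by
    intro y
    rw [← Finset.add_sum_erase _ _ (Finset.mem_univ i)]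
    congr 1
    · simp
    · refine Finset.sum_congr rfl ?_
      intro j hj
      rw [Function.update_of_ne (Finset.ne_of_mem_erase hj)]
  have hsym : ∀ u v : Fin m → ℝ, u ⬝ᵥ AG *ᵥ v = v ⬝ᵥ AG *ᵥ u := by
    intro u v
    subst hAG
    simp only [dotProduct, mulVec_diagonal]
    exact Finset.sum_congr rfl (fun k _ => by ring)
  have key : ∀ y : Fin m → ℝ,
      (1 / 2) * ((N i • y + s) ⬝ᵥ AG *ᵥ (N i • y + s)) + bG ⬝ᵥ (N i • y + s)
      = ((1 / 2) * (N i) ^ 2 * (y ⬝ᵥ AG *ᵥ y)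
          + N i * (y ⬝ᵥ (AG *ᵥ s + bG)))
        + ((1 / 2) * (s ⬝ᵥ AG *ᵥ s) + bG ⬝ᵥ s) := by
    intro y
    have h1 : s ⬝ᵥ AG *ᵥ (N i • y) = N i * (y ⬝ᵥ AG *ᵥ s) := by
      rw [hsym s (N i • y), smul_dotProduct, smul_eq_mul]
    have h2 : bG ⬝ᵥ (N i • y) = N i * (y ⬝ᵥ bG) := by
      rw [dotProduct_comm, smul_dotProduct, smul_eq_mul]
    simp only [add_dotProduct, mulVec_add, dotProduct_add, mulVec_smul,
      smul_dotProduct, dotProduct_smul, smul_eq_mul, h1, h2, hsym s y]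
    ring
  simp only [hsum, key]
  exact (fderiv_add_const _).symm
end

section
/- Let C be finite, N_i > 0, A_G diagonal positive definite. For each i define payoff J^i(x) = (1/2)N_i²(x^i)ᵀA_G x^i + N_i (x^i)ᵀ(A_G σ(x^{-i}) + b_G) on convex compact sets K̄_i contained in the probability simplex of ℝ^m. Then the matrix Γ(x) = G(x) + G(x)ᵀ, where G(x) is the Jacobian of the map g(x) = [−∇_{x^i} J^i(x)]_{i∈C}, satisfies xᵀ Γ x = −2(∑_i N_i x^i)ᵀ A_G (∑_i N_i x^i) < 0 for every x ∈ ∏_i K̄_i. -/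
open Matrix Finset

/-- The linear part of the affine map `g`. -/
noncomputable def Lmap {C : Type*} [Fintype C] (m : ℕ) (N : C → ℝ) (d : Fin m → ℝ) :
    (C → Fin m → ℝ) →L[ℝ] (C → Fin m → ℝ) :=
  LinearMap.toContinuousLinearMap
  { toFun := fun z i k => -(N i * (d k * ∑ j, N j * z j k))
    map_add' := by
      intro a b
      funext i k
      have h : ∑ j, N j * (a + b) j k = (∑ j, N j * a j k) + ∑ j, N j * b j k := by
        rw [← Finset.sum_add_distrib]
        exact Finset.sum_congr rfl fun j _ => by simp [Pi.add_apply]; ring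
      show -(N i * (d k * ∑ j, N j * (a + b) j k)) = _
      rw [h]; show _ = -(N i * (d k * ∑ j, N j * a j k)) + -(N i * (d k * ∑ j, N j * b j k))
      ring
    map_smul' := by
      intro c a
      funext i k
      have h : ∑ j, N j * (c • a) j k = c * ∑ j, N j * a j k := by
        rw [Finset.mul_sum]
        exact Finset.sum_congr rfl fun j _ => by simp [Pi.smul_apply, smul_eq_mul]; ring
      show -(N i * (d k * ∑ j, N j * (c • a) j k)) = _
      rw [h]
      show _ = (c • fun (i : C) (k : Fin m) => -(N i * (d k * ∑ j, N j * a j k))) i k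
      simp only [Pi.smul_apply, smul_eq_mul]
      ring }

theorem Lmap_apply {C : Type*} [Fintype C] (m : ℕ) (N : C → ℝ) (d : Fin m → ℝ)
    (z : C → Fin m → ℝ) (i : C) (k : Fin m) :
    Lmap m N d z i k = -(N i * (d k * ∑ j, N j * z j k)) := rfl

/-- Rosen's diagonal strict concavity computation: with `G(x)` the Jacobian of
`g(x) = [−∇_{x^i} J^i(x)]_i` and `Γ = G + Gᵀ`, we have
`xᵀΓx = −2 σ(x)ᵀ A_G σ(x) < 0` on the product of the strategy sets.
Here `xᵀΓx` is written as `xᵀG(x)x + (G(x)x)ᵀx`. -/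
theorem stmt14 {C : Type*} [Fintype C] [DecidableEq C] [Nonempty C] (m : ℕ)
    (N : C → ℝ) (hN : ∀ i, 0 < N i)
    (d : Fin m → ℝ) (AG : Matrix (Fin m) (Fin m) ℝ)
    (hAG : AG = Matrix.diagonal d) (hpd : AG.PosDef) (bG : Fin m → ℝ)
    (K : C → Set (Fin m → ℝ))
    (hKsimplex : ∀ i, K i ⊆ stdSimplex ℝ (Fin m))
    (hKconv : ∀ i, Convex ℝ (K i)) (hKcomp : ∀ i, IsCompact (K i))
    (J : C → (C → Fin m → ℝ) → ℝ)
    (hJ : ∀ i x, J i x =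
      (1 / 2) * (N i) ^ 2 * (x i ⬝ᵥ AG *ᵥ x i)
        + N i * (x i ⬝ᵥ (AG *ᵥ (∑ j ∈ univ.erase i, N j • x j) + bG)))
    (g : (C → Fin m → ℝ) → (C → Fin m → ℝ))
    (hg : ∀ x i k, g x i k =
      -((fderiv ℝ (fun y => J i (Function.update x i y)) (x i)) (Pi.single k 1)))
    (x : C → Fin m → ℝ) (hx : ∀ i, x i ∈ K i) :
    ((∑ i, x i ⬝ᵥ (fderiv ℝ g x) x i) + ∑ i, (fderiv ℝ g x) x i ⬝ᵥ x i)
        = -2 * ((∑ i, N i • x i) ⬝ᵥ AG *ᵥ (∑ i, N i • x i)) ∧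
      ((∑ i, x i ⬝ᵥ (fderiv ℝ g x) x i) + ∑ i, (fderiv ℝ g x) x i ⬝ᵥ x i) < 0 := by
  -- explicit formula for g
  have hgx : ∀ (z : C → Fin m → ℝ) (i : C) (k : Fin m),
      g z i k = -(N i ^ 2 * (d k * z i k)
        + N i * (d k * (∑ j ∈ univ.erase i, N j * z j k) + bG k)) := by
    intro z i k
    rw [hg]
    have hFeq : (fun y => J i (Function.update z i y)) =
        fun y : Fin m → ℝ => (1/2) * N i ^ 2 * (∑ l, y l * (d l * y l))
          + N i * (∑ l, y l * (d l * (∑ j ∈ univ.erase i, N j * z j l) + bG l)) := by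
      funext y
      rw [hJ]
      have h1 : Function.update z i y i = y := Function.update_self i y z
      have h2 : (∑ j ∈ univ.erase i, N j • Function.update z i y j)
          = ∑ j ∈ univ.erase i, N j • z j := by
        refine Finset.sum_congr rfl fun j hj => ?_
        rw [Function.update_of_ne (Finset.ne_of_mem_erase hj)]
      rw [h1, h2]
      simp only [hAG, dotProduct, Matrix.mulVec_diagonal, Pi.add_apply,
        Finset.sum_apply, Pi.smul_apply, smul_eq_mul]
    rw [hFeq]
    have hproj : ∀ l : Fin m, HasFDerivAt (fun y : Fin m → ℝ => y l)
        (ContinuousLinearMap.proj l : (Fin m → ℝ) →L[ℝ] ℝ) (z i) := fun l => by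
      exact ContinuousLinearMap.hasFDerivAt (ContinuousLinearMap.proj (R := ℝ) (φ := fun _ : Fin m => ℝ) l)
    have hq : HasFDerivAt (fun y : Fin m → ℝ => ∑ l, y l * (d l * y l))
        (∑ l : Fin m, ((z i l) • (d l • (ContinuousLinearMap.proj l :
            (Fin m → ℝ) →L[ℝ] ℝ)) + (d l * z i l) • ContinuousLinearMap.proj l)) (z i) :=
      HasFDerivAt.fun_sum fun l _ => (hproj l).fun_mul ((hproj l).const_mul (d l))
    have hl : HasFDerivAt (fun y : Fin m → ℝ =>
          ∑ l, y l * (d l * (∑ j ∈ univ.erase i, N j * z j l) + bG l))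
        (∑ l : Fin m, (d l * (∑ j ∈ univ.erase i, N j * z j l) + bG l) •
          (ContinuousLinearMap.proj l : (Fin m → ℝ) →L[ℝ] ℝ)) (z i) :=
      HasFDerivAt.fun_sum fun l _ => (hproj l).mul_const _
    have hF := (hq.const_mul ((1/2) * N i ^ 2)).fun_add (hl.const_mul (N i))
    rw [hF.fderiv]
    simp only [ContinuousLinearMap.add_apply, ContinuousLinearMap.smul_apply,
      ContinuousLinearMap.coe_sum', Finset.sum_apply, ContinuousLinearMap.proj_apply,
      Pi.single_apply, smul_eq_mul, mul_ite, mul_one, mul_zero,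
      Finset.sum_add_distrib, Finset.sum_ite_eq', Finset.mem_univ, if_true]
    ring
  -- g is affine with linear part Lmap
  have hgdecomp : g = fun z => Lmap m N d z + (fun i k => -(N i * bG k)) := by
    funext z i k
    rw [hgx]
    show _ = Lmap m N d z i k + -(N i * bG k)
    rw [Lmap_apply,
      ← Finset.add_sum_erase univ (fun j => N j * z j k) (Finset.mem_univ i)]
    ring
  have hDg : fderiv ℝ g x = Lmap m N d := by
    rw [hgdecomp]
    exact ((Lmap m N d).hasFDerivAt.add_const _).fderiv
  set S : Fin m → ℝ := fun k => ∑ j, N j * x j k with hSdef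
  have hσ : ∀ k, (∑ j, N j • x j) k = S k := by
    intro k; simp [hSdef, Finset.sum_apply]
  have hterm : ∀ i, (fderiv ℝ g x) x i = fun k => -(N i * (d k * S k)) := by
    intro i; funext k; rw [hDg]; exact Lmap_apply m N d x i k
  have hsum1 : (∑ i, x i ⬝ᵥ (fderiv ℝ g x) x i) = -(∑ k, d k * S k * S k) := by
    calc ∑ i, x i ⬝ᵥ (fderiv ℝ g x) x i
        = ∑ i, ∑ k, x i k * -(N i * (d k * S k)) := by
          refine Finset.sum_congr rfl fun i _ => ?_; rw [hterm i]; rfl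
      _ = ∑ k, ∑ i, x i k * -(N i * (d k * S k)) := Finset.sum_comm
      _ = ∑ k, -(d k * S k) * ∑ i, N i * x i k := by
          refine Finset.sum_congr rfl fun k _ => ?_
          conv_rhs => rw [Finset.mul_sum]
          exact Finset.sum_congr rfl fun i _ => by ring
      _ = -(∑ k, d k * S k * S k) := by
          rw [← Finset.sum_neg_distrib]
          refine Finset.sum_congr rfl fun k _ => ?_
          rw [show (∑ i, N i * x i k) = S k from rfl]
          ring
  have hsum2 : (∑ i, (fderiv ℝ g x) x i ⬝ᵥ x i) = -(∑ k, d k * S k * S k) := by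
    calc ∑ i, (fderiv ℝ g x) x i ⬝ᵥ x i
        = ∑ i, ∑ k, -(N i * (d k * S k)) * x i k := by
          refine Finset.sum_congr rfl fun i _ => ?_; rw [hterm i]; rfl
      _ = ∑ k, ∑ i, -(N i * (d k * S k)) * x i k := Finset.sum_comm
      _ = ∑ k, -(d k * S k) * ∑ i, N i * x i k := by
          refine Finset.sum_congr rfl fun k _ => ?_
          conv_rhs => rw [Finset.mul_sum]
          exact Finset.sum_congr rfl fun i _ => by ring
      _ = -(∑ k, d k * S k * S k) := by
          rw [← Finset.sum_neg_distrib]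
          refine Finset.sum_congr rfl fun k _ => ?_
          rw [show (∑ i, N i * x i k) = S k from rfl]
          ring
  have hrhs : ((∑ i, N i • x i) ⬝ᵥ AG *ᵥ (∑ i, N i • x i)) = ∑ k, d k * S k * S k := by
    simp only [hAG, dotProduct, Matrix.mulVec_diagonal, hσ]
    exact Finset.sum_congr rfl fun k _ => by ring
  have heq : ((∑ i, x i ⬝ᵥ (fderiv ℝ g x) x i) + ∑ i, (fderiv ℝ g x) x i ⬝ᵥ x i)
      = -2 * ((∑ i, N i • x i) ⬝ᵥ AG *ᵥ (∑ i, N i • x i)) := by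
    rw [hsum1, hsum2, hrhs]; ring
  refine ⟨heq, ?_⟩
  rw [heq]
  have hσ0 : (∑ i, N i • x i) ≠ 0 := by
    intro h
    have hsum : ∑ k, (∑ i, N i • x i) k = 0 := by rw [h]; simp
    have hNs : ∑ k, (∑ i, N i • x i) k = ∑ i, N i := by
      simp only [hσ, hSdef]
      rw [Finset.sum_comm]
      refine Finset.sum_congr rfl fun i _ => ?_
      rw [← Finset.mul_sum, (hKsimplex i (hx i)).2, mul_one]
    have hpos : 0 < ∑ i, N i := Finset.sum_pos (fun i _ => hN i) Finset.univ_nonempty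
    rw [hNs] at hsum
    linarith
  have hq := hpd.dotProduct_mulVec_pos hσ0
  simp only [star_trivial] at hq
  linarith
end

section
/- Let K ⊆ ℝ^n be nonempty, compact and convex, and H : K → K non-expansive. Then the Krasnoselskij iteration x(k+1) = (1/2)(x(k) + H(x(k))), starting from any x(0) ∈ K, converges to a fixed point of H. -/
open Filter

lemma half_sq_aux {E : Type*} [NormedAddCommGroup E] [InnerProductSpace ℝ E] (a b : E) :
    ‖(1 / 2 : ℝ) • (a + b)‖ ^ 2 = ‖a‖ ^ 2 / 2 + ‖b‖ ^ 2 / 2 - ‖a - b‖ ^ 2 / 4 := by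
  rw [norm_smul, Real.norm_eq_abs, abs_of_pos (by norm_num : (0:ℝ) < 1/2)]
  nlinarith [norm_add_sq_real a b, norm_sub_sq_real a b]

lemma sq_le_imp_aux {a b : ℝ} (_ha : 0 ≤ a) (hb : 0 ≤ b) (h : a ^ 2 ≤ b ^ 2) : a ≤ b := by
  nlinarith

set_option maxHeartbeats 1000000 in
/-- Krasnoselskij iteration: averaged iterates of a non-expansive self-map of a
nonempty compact convex set converge to a fixed point. -/
theorem stmt18 (n : ℕ) (K : Set (EuclideanSpace ℝ (Fin n)))
    (hKne : K.Nonempty) (hKcomp : IsCompact K) (hKconv : Convex ℝ K)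
    (H : EuclideanSpace ℝ (Fin n) → EuclideanSpace ℝ (Fin n))
    (hmaps : Set.MapsTo H K K) (hnonexp : LipschitzOnWith 1 H K)
    (x : ℕ → EuclideanSpace ℝ (Fin n)) (hx0 : x 0 ∈ K)
    (hiter : ∀ k, x (k + 1) = (1 / 2 : ℝ) • (x k + H (x k))) :
    ∃ p ∈ K, H p = p ∧ Tendsto x atTop (nhds p) := by
  -- all iterates stay in K
  have hxK : ∀ k, x k ∈ K := by
    intro k
    induction k with
    | zero => exact hx0
    | succ k ih =>
      rw [hiter k, smul_add]
      exact hKconv ih (hmaps ih) (by norm_num) (by norm_num) (by norm_num)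
  -- nonexpansiveness in norm form
  have hne : ∀ a ∈ K, ∀ b ∈ K, ‖H a - H b‖ ≤ ‖a - b‖ := by
    intro a ha b hb
    have := (lipschitzOnWith_iff_dist_le_mul.mp hnonexp) a ha b hb
    simpa [dist_eq_norm] using this
  -- the key Fejér-type inequality
  have key : ∀ z ∈ K, H z = z →
      ∀ k, ‖x (k+1) - z‖ ^ 2 ≤ ‖x k - z‖ ^ 2 - ‖H (x k) - x k‖ ^ 2 / 4 := by
    intro z hz hfz k
    have h1 : x (k+1) - z = (1/2 : ℝ) • ((x k - z) + (H (x k) - z)) := by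
      rw [hiter k]; module
    have h2 : ‖H (x k) - z‖ ≤ ‖x k - z‖ := by
      have := hne (x k) (hxK k) z hz
      rwa [hfz] at this
    have h3 : (x k - z) - (H (x k) - z) = -(H (x k) - x k) := by abel
    rw [h1, half_sq_aux, h3, norm_neg]
    nlinarith [norm_nonneg (H (x k) - z), norm_nonneg (x k - z)]
  obtain ⟨p0, hp0⟩ := hKne
  obtain ⟨C, hC⟩ := Metric.isBounded_iff.mp hKcomp.isBounded
  have hC0 : (0:ℝ) ≤ C := le_trans dist_nonneg (hC hp0 hp0)
  -- approximate fixed points via Banach contraction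
  have hfix : ∀ m : ℕ, ∃ q ∈ K,
      q = (1/((m:ℝ)+2)) • p0 + (1 - 1/((m:ℝ)+2)) • H q := by
    intro m
    set t : ℝ := 1/((m:ℝ)+2) with htdef
    have hm : (0:ℝ) ≤ (m:ℝ) := Nat.cast_nonneg m
    have ht0 : 0 < t := by positivity
    have ht1 : t < 1 := by
      rw [htdef, div_lt_one (by linarith)]; linarith
    set G : EuclideanSpace ℝ (Fin n) → EuclideanSpace ℝ (Fin n) :=
      fun y => t • p0 + (1 - t) • H y with hGdef
    have hmapsG : Set.MapsTo G K K := by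
      intro y hy
      show t • p0 + (1 - t) • H y ∈ K
      exact hKconv hp0 (hmaps hy) ht0.le (by linarith) (by ring)
    have hlipG : LipschitzOnWith (Real.toNNReal (1 - t)) G K := by
      rw [lipschitzOnWith_iff_dist_le_mul]
      intro a ha b hb
      have h1 : G a - G b = (1 - t) • (H a - H b) := by rw [hGdef]; module
      rw [dist_eq_norm, h1, norm_smul, Real.norm_eq_abs,
        abs_of_nonneg (by linarith : (0:ℝ) ≤ 1 - t),
        Real.coe_toNNReal _ (by linarith : (0:ℝ) ≤ 1 - t), dist_eq_norm]
      exact mul_le_mul_of_nonneg_left (hne a ha b hb) (by linarith)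
    have hcontr : ContractingWith (Real.toNNReal (1 - t)) (hmapsG.restrict G K K) := by
      constructor
      · rw [← Real.toNNReal_one]
        exact (Real.toNNReal_lt_toNNReal_iff one_pos).mpr (by linarith)
      · exact hlipG.mapsToRestrict hmapsG
    obtain ⟨q, hqK, hq, -, -⟩ :=
      hcontr.exists_fixedPoint' hKcomp.isComplete hmapsG hp0 (edist_ne_top _ _)
    exact ⟨q, hqK, hq.symm⟩
  choose q hqK hq using hfix
  have hres : ∀ m, ‖H (q m) - q m‖ ≤ (1/((m:ℝ)+2)) * C := by
    intro m
    have h1 : H (q m) - q m = (1/((m:ℝ)+2)) • (H (q m) - p0) := by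
      nth_rewrite 2 [hq m]; module
    rw [h1, norm_smul, Real.norm_eq_abs, abs_of_pos (by positivity)]
    have : ‖H (q m) - p0‖ ≤ C := by
      rw [← dist_eq_norm]; exact hC (hmaps (hqK m)) hp0
    exact mul_le_mul_of_nonneg_left this (by positivity)
  have hcoef : Tendsto (fun m : ℕ => (1/((m:ℝ)+2)) * C) atTop (nhds 0) := by
    have h1 : Tendsto (fun m : ℕ => ((m:ℝ)+2)) atTop atTop :=
      tendsto_atTop_add_const_right _ 2 tendsto_natCast_atTop_atTop
    have h2 := h1.inv_tendsto_atTop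
    simpa [one_div] using h2.mul_const C
  have hres0 : Tendsto (fun m => H (q m) - q m) atTop (nhds (0 : EuclideanSpace ℝ (Fin n))) := by
    apply squeeze_zero_norm hres hcoef
  -- a convergent subsequence of the approximate fixed points gives a fixed point p
  obtain ⟨p, hpK, φ, hφ, hφt⟩ := hKcomp.tendsto_subseq hqK
  have hHcont : ContinuousOn H K := hnonexp.continuousOn
  have h1 : Tendsto (fun j => H (q (φ j))) atTop (nhds (H p)) := by
    apply ((hHcont p hpK).tendsto).comp
    exact tendsto_nhdsWithin_iff.mpr ⟨hφt, Eventually.of_forall fun j => hqK _⟩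
  have h2 : Tendsto (fun j => H (q (φ j))) atTop (nhds p) := by
    have := hφt.add (hres0.comp hφ.tendsto_atTop)
    simpa using this
  have hpfix : H p = p := tendsto_nhds_unique h1 h2
  -- asymptotic regularity: residuals of the iterates tend to 0
  have hkeyp := key p hpK hpfix
  set b : ℕ → ℝ := fun k => ‖x k - p‖ ^ 2 with hbdef
  have hbanti : Antitone b := antitone_nat_of_succ_le fun k => by
    have := hkeyp k; simp only [hbdef]; nlinarith [sq_nonneg ‖H (x k) - x k‖]
  have hbbdd : BddBelow (Set.range b) := ⟨0, by rintro y ⟨k, rfl⟩; positivity⟩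
  have hbL := tendsto_atTop_ciInf hbanti hbbdd
  have hdiff : Tendsto (fun k => b k - b (k+1)) atTop (nhds 0) := by
    have h2 : Tendsto (fun k => b (k+1)) atTop (nhds (⨅ i, b i)) :=
      hbL.comp (tendsto_add_atTop_nat 1)
    simpa using hbL.sub h2
  have hr2 : Tendsto (fun k => ‖H (x k) - x k‖ ^ 2) atTop (nhds 0) := by
    apply squeeze_zero (fun k => sq_nonneg _) (fun k => ?_) (by simpa using hdiff.const_mul 4)
    have := hkeyp k; simp only [hbdef]; nlinarith
  have hrt : Tendsto (fun k => ‖H (x k) - x k‖) atTop (nhds 0) := by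
    have := hr2.sqrt
    simpa [Real.sqrt_sq (norm_nonneg _)] using this
  have hv0 : Tendsto (fun k => H (x k) - x k) atTop (nhds (0 : EuclideanSpace ℝ (Fin n))) :=
    squeeze_zero_norm (fun k => le_refl _) hrt
  -- cluster point of the iterates is a fixed point
  obtain ⟨z, hzK, ψ, hψ, hzx⟩ := hKcomp.tendsto_subseq hxK
  have hz1 : Tendsto (fun j => H (x (ψ j))) atTop (nhds (H z)) := by
    apply ((hHcont z hzK).tendsto).comp
    exact tendsto_nhdsWithin_iff.mpr ⟨hzx, Eventually.of_forall fun j => hxK _⟩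
  have hz2 : Tendsto (fun j => H (x (ψ j))) atTop (nhds z) := by
    have := hzx.add (hv0.comp hψ.tendsto_atTop)
    simpa using this
  have hzfix : H z = z := tendsto_nhds_unique hz1 hz2
  -- Fejér monotonicity w.r.t. z plus a subsequence converging to z
  have hkeyz := key z hzK hzfix
  have hanti : Antitone (fun k => ‖x k - z‖) := antitone_nat_of_succ_le fun k => by
    apply sq_le_imp_aux (norm_nonneg _) (norm_nonneg _)
    have := hkeyz k; nlinarith [sq_nonneg ‖H (x k) - x k‖]
  have hcL := tendsto_atTop_ciInf hanti
    (⟨0, by rintro y ⟨k, rfl⟩; positivity⟩ : BddBelow (Set.range fun k => ‖x k - z‖))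
  have hsub0 : Tendsto (fun j => ‖x (ψ j) - z‖) atTop (nhds 0) :=
    tendsto_iff_norm_sub_tendsto_zero.mp hzx
  have hsubL := hcL.comp hψ.tendsto_atTop
  have hL0 : (⨅ k, ‖x k - z‖) = 0 := tendsto_nhds_unique hsubL hsub0
  rw [hL0] at hcL
  exact ⟨z, hzK, hzfix, tendsto_iff_norm_sub_tendsto_zero.mpr hcL⟩
end
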